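/- Let 𝕀 be the category whose objects are the natural numbers and whose morphisms m → n are the injective functions Fin m → Fin n, and let Σ be the subcategory with the same objects and with morphisms only the bijections (so Hom_Σ(n, n) = Perm(Fin n) and there are no morphisms between distinct objects). For σ ∈ Perm(Fin n), let σ⁺ ∈ Perm(Fin (n+1)) be the permutation acting as σ on the first n elements (via Fin.castSucc) and fixing the last element; for τ ∈ Perm(Fin k), let 1ₘ ⊕ τ ∈ Perm(Fin (m+k)) be the block-sum permutation acting (under the canonical equivalence Fin (m+k) ≃ Fin m ⊕ Fin k) as the identity on the first block and as τ on the second block. Define a category M whose objects are pairs (X, s) where X : Σ ⥤ TopCat is a functor and s = (sₙ : X(n) ⟶ X(n+1))_{n ≥ 0} is a family of morphisms satisfying: (a) sₙ ∘ X(σ) = X(σ⁺) ∘ sₙ for every n and every σ ∈ Perm(Fin n); and (b) X(1ₘ ⊕ τ) ∘ s⁽ᵏ⁾ = s⁽ᵏ⁾ for all m, k and every τ ∈ Perm(Fin k), where s⁽ᵏ⁾ : X(m) ⟶ X(m+k) denotes the composite s_{m+k−1} ∘ ⋯ ∘ s_m; and whose morphisms (X, s) → (Y, t) are natural transformations α :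 X ⟶ Y with α_{n+1} ∘ sₙ = tₙ ∘ αₙ for all n. Then the functor category (𝕀 ⥤ TopCat) is equivalent to M, via the functor sending Z : 𝕀 ⥤ TopCat to its restriction along Σ ⊆ 𝕀 together with the maps sₙ = Z(ιₙ) induced by the canonical inclusions ιₙ : n → n+1. -/

import Mathlib

open CategoryTheory

/-- The category `𝕀` with objects the natural numbers and morphisms `m ⟶ n`
the injective functions `Fin m → Fin n`. -/
def InjCat : Type := ℕ

/-- Regard a natural number as an object of `InjCat`. -/
def InjCat.of (n : ℕ) : InjCat := n

instance : Category InjCat where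
  Hom m n := {f : Fin m → Fin n // Function.Injective f}
  id _ := ⟨id, fun _ _ h => h⟩
  comp f g := ⟨g.1 ∘ f.1, g.2.comp f.2⟩
  id_comp _ := Subtype.ext rfl
  comp_id _ := Subtype.ext rfl
  assoc _ _ _ := Subtype.ext rfl

/-- The subcategory `Σ` with objects the natural numbers and morphisms `m ⟶ n`
the bijective functions `Fin m → Fin n`; so the only morphisms are the
permutations `Perm (Fin n) : n ⟶ n`, and there are no morphisms between
distinct objects. -/
def PermCat : Type := ℕ

/-- Regard a natural number as an object of `PermCat`. -/
def PermCat.of (n : ℕ) : PermCat := n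

instance : Category PermCat where
  Hom m n := {f : Fin m → Fin n // Function.Bijective f}
  id _ := ⟨id, Function.bijective_id⟩
  comp f g := ⟨g.1 ∘ f.1, g.2.comp f.2⟩
  id_comp _ := Subtype.ext rfl
  comp_id _ := Subtype.ext rfl
  assoc _ _ _ := Subtype.ext rfl

/-- The inclusion functor `Σ ⊆ 𝕀`. -/
def permToInj : PermCat ⥤ InjCat where
  obj n := n
  map f := ⟨f.1, f.2.injective⟩
  map_id _ := rfl
  map_comp _ _ := rfl

/-- A permutation of `Fin n`, as a morphism of `PermCat`. -/
def permHom {n : ℕ} (σ : Equiv.Perm (Fin n)) : PermCat.of n ⟶ PermCat.of n :=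
  ⟨σ, σ.bijective⟩

/-- The canonical inclusion `ιₙ : n ⟶ n + 1` of `InjCat`. -/
def iota (n : ℕ) : InjCat.of n ⟶ InjCat.of (n + 1) :=
  ⟨Fin.castSucc, Fin.castSucc_injective n⟩

/-- `σ⁺`: the permutation of `Fin (n+1)` acting as `σ` on the first `n` elements
(via `Fin.castSucc`) and fixing the last element. -/
def succPerm {n : ℕ} (σ : Equiv.Perm (Fin n)) : Equiv.Perm (Fin (n + 1)) :=
  finSumFinEquiv.permCongr (σ.sumCongr (Equiv.refl (Fin 1)))

/-- `1ₘ ⊕ τ`: the block-sum permutation of `Fin (m + k)` acting (under the canonical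
equivalence `Fin (m + k) ≃ Fin m ⊕ Fin k`) as the identity on the first block and as
`τ` on the second block. -/
def blockSum (m : ℕ) {k : ℕ} (τ : Equiv.Perm (Fin k)) : Equiv.Perm (Fin (m + k)) :=
  finSumFinEquiv.permCongr ((Equiv.refl (Fin m)).sumCongr τ)

universe u

/-- The iterated stabilization map `s⁽ᵏ⁾ = s_{m+k-1} ∘ ⋯ ∘ s_m : X(m) ⟶ X(m+k)`. -/
def iterMap (X : PermCat ⥤ TopCat.{u})
    (s : ∀ n : ℕ, X.obj (PermCat.of n) ⟶ X.obj (PermCat.of (n + 1))) (m : ℕ) :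
    ∀ k : ℕ, X.obj (PermCat.of m) ⟶ X.obj (PermCat.of (m + k))
  | 0 => 𝟙 _
  | k + 1 => iterMap X s m k ≫ s (m + k)

/-- An object of the category `M`: a functor `X : Σ ⥤ TopCat` together with
stabilization maps `sₙ : X(n) ⟶ X(n+1)` satisfying
(a) `sₙ ∘ X(σ) = X(σ⁺) ∘ sₙ` for every `n` and `σ ∈ Perm (Fin n)`, and
(b) `X(1ₘ ⊕ τ) ∘ s⁽ᵏ⁾ = s⁽ᵏ⁾` for all `m, k` and `τ ∈ Perm (Fin k)`. -/
structure MObj where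
  X : PermCat ⥤ TopCat.{u}
  s : ∀ n : ℕ, X.obj (PermCat.of n) ⟶ X.obj (PermCat.of (n + 1))
  perm_comm : ∀ (n : ℕ) (σ : Equiv.Perm (Fin n)),
    X.map (permHom σ) ≫ s n = s n ≫ X.map (permHom (succPerm σ))
  stab_inv : ∀ (m k : ℕ) (τ : Equiv.Perm (Fin k)),
    iterMap X s m k ≫ X.map (permHom (blockSum m τ)) = iterMap X s m k

/-- A morphism of `M`: a natural transformation `α : X ⟶ Y` commuting with the
stabilization maps, `α_{n+1} ∘ sₙ = tₙ ∘ αₙ`. -/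
@[ext]
structure MHom (A B : MObj.{u}) where
  α : A.X ⟶ B.X
  comm : ∀ n : ℕ,
    A.s n ≫ α.app (PermCat.of (n + 1)) = α.app (PermCat.of n) ≫ B.s n

instance : Category MObj.{u} where
  Hom := MHom
  id A := ⟨𝟙 A.X, fun n => by simp⟩
  comp f g := ⟨f.α ≫ g.α, fun n => by
    simp only [NatTrans.comp_app, ← Category.assoc, f.comm n]
    simp only [Category.assoc, g.comm n]⟩
  id_comp f := MHom.ext (Category.id_comp f.α)
  comp_id f := MHom.ext (Category.comp_id f.α)
  assoc f g h := MHom.ext (Category.assoc f.α g.α h.α)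


lemma succPerm_castSucc {n : ℕ} (σ : Equiv.Perm (Fin n)) (i : Fin n) :
    succPerm σ (Fin.castSucc i) = Fin.castSucc (σ i) := by
  have h : ∀ j : Fin n, Fin.castSucc j = finSumFinEquiv (Sum.inl j) := fun _ => rfl
  rw [succPerm, Equiv.permCongr_apply, h i, Equiv.symm_apply_apply, h (σ i)]
  rfl

lemma iota_comm {n : ℕ} (σ : Equiv.Perm (Fin n)) :
    permToInj.map (permHom σ) ≫ iota n = iota n ≫ permToInj.map (permHom (succPerm σ)) :=
  Subtype.ext (funext fun i => (succPerm_castSucc σ i).symm)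

/-- The canonical inclusion `m ⟶ m + k` of `InjCat`. -/
def iotaMany (m k : ℕ) : InjCat.of m ⟶ InjCat.of (m + k) :=
  ⟨Fin.castAdd k, Fin.castAdd_injective m k⟩

lemma iotaMany_zero (m : ℕ) : iotaMany m 0 = 𝟙 (InjCat.of m) :=
  Subtype.ext (funext fun _ => Fin.ext rfl)

lemma iotaMany_succ (m k : ℕ) :
    iotaMany m k ≫ iota (m + k) = iotaMany m (k + 1) :=
  Subtype.ext (funext fun _ => Fin.ext rfl)

lemma iterMap_restrict (Z : InjCat ⥤ TopCat.{u}) (m : ℕ) :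
    ∀ k : ℕ, iterMap (permToInj ⋙ Z) (fun n => Z.map (iota n)) m k = Z.map (iotaMany m k)
  | 0 => by
      rw [iterMap, iotaMany_zero, Z.map_id]
      rfl
  | k + 1 => by
      rw [iterMap, iterMap_restrict Z m k]
      exact (Z.map_comp _ _).symm.trans (congrArg Z.map (iotaMany_succ m k))

lemma blockSum_castAdd {m k : ℕ} (τ : Equiv.Perm (Fin k)) (i : Fin m) :
    blockSum m τ (Fin.castAdd k i) = Fin.castAdd k i := by
  have h : Fin.castAdd k i = finSumFinEquiv (Sum.inl i) := rfl
  rw [blockSum, Equiv.permCongr_apply, h, Equiv.symm_apply_apply]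
  rfl

lemma iotaMany_blockSum {m k : ℕ} (τ : Equiv.Perm (Fin k)) :
    iotaMany m k ≫ permToInj.map (permHom (blockSum m τ)) = iotaMany m k :=
  Subtype.ext (funext fun i => blockSum_castAdd τ i)

/-- The restriction functor from `𝕀 ⥤ TopCat` to `M`, sending `Z` to its restriction
along `Σ ⊆ 𝕀` together with the stabilization maps `sₙ = Z(ιₙ)` induced by the
canonical inclusions `ιₙ : n ⟶ n + 1`. -/
def restrictFunctor : (InjCat ⥤ TopCat.{u}) ⥤ MObj.{u} where
  obj Z :=
    { X := permToInj ⋙ Z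
      s := fun n => Z.map (iota n)
      perm_comm := fun n σ => by
        dsimp only [Functor.comp_map]
        exact (Z.map_comp _ _).symm.trans ((congrArg Z.map (iota_comm σ)).trans (Z.map_comp _ _))
      stab_inv := fun m k τ => by
        dsimp only [Functor.comp_map]
        rw [iterMap_restrict]
        exact (Z.map_comp _ _).symm.trans (congrArg Z.map (iotaMany_blockSum τ)) }
  map f :=
    { α := Functor.whiskerLeft permToInj f
      comm := fun n => f.naturality (iota n) }
  map_id _ := rfl
  map_comp _ _ := rfl

section Aux

open Equiv Function

lemma inj_le {m n : ℕ} {f : Fin m → Fin n} (hf : Function.Injective f) : m ≤ n := by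
  simpa using Fintype.card_le_of_injective f hf

lemma exists_ext {m n : ℕ} (h : m ≤ n) (f : Fin m → Fin n) (hf : Function.Injective f) :
    ∃ σ : Equiv.Perm (Fin n), ∀ i, σ (Fin.castLE h i) = f i := by
  classical
  have hginj : Function.Injective (Fin.castLE h) := Fin.castLE_injective h
  let e1 : Fin m ≃ Set.range (Fin.castLE h) := Equiv.ofInjective _ hginj
  let e2 : Fin m ≃ Set.range f := Equiv.ofInjective f hf
  refine ⟨(e1.symm.trans e2).extendSubtype, fun i => ?_⟩
  rw [Equiv.extendSubtype_apply_of_mem _ _ ⟨i, rfl⟩]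
  have h1 : (⟨Fin.castLE h i, ⟨i, rfl⟩⟩ : Set.range (Fin.castLE h)) = e1 i := by
    simp [e1, Equiv.ofInjective_apply]
  simp [Equiv.trans_apply, h1, e2, Equiv.ofInjective_apply]

/-- A chosen permutation of `Fin n` extending the injection `f : Fin m → Fin n`. -/
noncomputable def extPerm {m n : ℕ} (f : Fin m → Fin n) (hf : Function.Injective f) :
    Equiv.Perm (Fin n) :=
  Classical.choose (exists_ext (inj_le hf) f hf)

lemma extPerm_spec {m n : ℕ} (f : Fin m → Fin n) (hf : Function.Injective f) (i : Fin m) :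
    extPerm f hf (Fin.castLE (inj_le hf) i) = f i :=
  Classical.choose_spec (exists_ext (inj_le hf) f hf) i

lemma blockSum_natAdd {m k : ℕ} (τ : Equiv.Perm (Fin k)) (j : Fin k) :
    blockSum m τ (Fin.natAdd m j) = Fin.natAdd m (τ j) := by
  have h : ∀ j : Fin k, Fin.natAdd m j = finSumFinEquiv (Sum.inr j) := fun _ => rfl
  rw [blockSum, Equiv.permCongr_apply, h j, Equiv.symm_apply_apply, h (τ j)]
  rfl

lemma fixing_eq_blockSum {m k : ℕ} (π : Equiv.Perm (Fin (m + k)))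
    (hπ : ∀ i : Fin m, π (Fin.castAdd k i) = Fin.castAdd k i) :
    ∃ τ : Equiv.Perm (Fin k), π = blockSum m τ := by
  have hval : ∀ j : Fin k, m ≤ (π (Fin.natAdd m j)).val := by
    intro j
    by_contra hlt
    push_neg at hlt
    have h1 : π (Fin.natAdd m j) = Fin.castAdd k ⟨(π (Fin.natAdd m j)).val, hlt⟩ := Fin.ext rfl
    have h2 : π (Fin.natAdd m j) = π (Fin.castAdd k ⟨(π (Fin.natAdd m j)).val, hlt⟩) := by
      rw [hπ]; exact h1
    have h3 := congrArg Fin.val (π.injective h2.symm)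
    simp only [Fin.coe_castAdd, Fin.coe_natAdd] at h3
    omega
  let g : Fin k → Fin k := fun j =>
    ⟨(π (Fin.natAdd m j)).val - m, by have := (π (Fin.natAdd m j)).isLt; have := hval j; omega⟩
  have hg : ∀ j, Fin.natAdd m (g j) = π (Fin.natAdd m j) := by
    intro j
    have h5 := hval j
    apply Fin.ext
    show m + ((π (Fin.natAdd m j)).val - m) = _
    omega
  have hginj : Function.Injective g := by
    intro a b hab
    have h6 : ((π (Fin.natAdd m a)).val - m) = ((π (Fin.natAdd m b)).val - m) :=
      congrArg Fin.val hab
    have h7 : π (Fin.natAdd m a) = π (Fin.natAdd m b) := by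
      apply Fin.ext
      have := hval a; have := hval b; omega
    have h8 := congrArg Fin.val (π.injective h7)
    simp only [Fin.coe_natAdd] at h8
    exact Fin.ext (by omega)
  refine ⟨Equiv.ofBijective g ((Finite.injective_iff_bijective).mp hginj), ?_⟩
  apply Equiv.ext
  intro x
  refine Fin.addCases (fun i => ?_) (fun j => ?_) x
  · rw [hπ, blockSum_castAdd]
  · rw [blockSum_natAdd]
    exact (hg j).symm

/-- `succPerm` iterated: extend `σ : Perm (Fin m)` to `Perm (Fin (m + k))` by the
identity on the last `k` coordinates. -/
def iterSucc {m : ℕ} (σ : Equiv.Perm (Fin m)) : ∀ k : ℕ, Equiv.Perm (Fin (m + k))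
  | 0 => σ
  | k + 1 => succPerm (iterSucc σ k)

lemma iterSucc_castLE {m : ℕ} (σ : Equiv.Perm (Fin m)) :
    ∀ (k : ℕ) (x : Fin m),
      iterSucc σ k (Fin.castLE (Nat.le_add_right m k) x)
        = Fin.castLE (Nat.le_add_right m k) (σ x)
  | 0, x => by
      have h1 : Fin.castLE (Nat.le_add_right m 0) x = x := Fin.ext rfl
      have h2 : Fin.castLE (Nat.le_add_right m 0) (σ x) = σ x := Fin.ext rfl
      rw [h1, h2]; rfl
  | k + 1, x => by
      have h1 : Fin.castLE (Nat.le_add_right m (k + 1)) x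
          = Fin.castSucc (Fin.castLE (Nat.le_add_right m k) x) := Fin.ext rfl
      have h2 : Fin.castLE (Nat.le_add_right m (k + 1)) (σ x)
          = Fin.castSucc (Fin.castLE (Nat.le_add_right m k) (σ x)) := Fin.ext rfl
      rw [h1, h2]
      show succPerm (iterSucc σ k) _ = _
      rw [succPerm_castSucc, iterSucc_castLE σ k x]

lemma permHom_mul {n : ℕ} (σ τ : Equiv.Perm (Fin n)) :
    permHom (σ * τ) = permHom τ ≫ permHom σ :=
  Subtype.ext rfl

lemma permHom_one (n : ℕ) : permHom (1 : Equiv.Perm (Fin n)) = 𝟙 (PermCat.of n) :=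
  Subtype.ext rfl

lemma map_iterMap (A : MObj.{u}) {m : ℕ} (σ : Equiv.Perm (Fin m)) :
    ∀ k : ℕ, A.X.map (permHom σ) ≫ iterMap A.X A.s m k
      = iterMap A.X A.s m k ≫ A.X.map (permHom (iterSucc σ k))
  | 0 => by
      show A.X.map (permHom σ) ≫ 𝟙 _ = 𝟙 _ ≫ A.X.map (permHom σ)
      simp
  | k + 1 => by
      show A.X.map (permHom σ) ≫ iterMap A.X A.s m k ≫ A.s (m + k)
        = (iterMap A.X A.s m k ≫ A.s (m + k)) ≫ A.X.map (permHom (succPerm (iterSucc σ k)))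
      rw [← Category.assoc, map_iterMap A σ k, Category.assoc, A.perm_comm (m + k),
        Category.assoc]

/-- Canonical stabilization `X(m) ⟶ X(n)` for `m ≤ n`. -/
def iterTo (A : MObj.{u}) (m : ℕ) :
    ∀ n : ℕ, m ≤ n → (A.X.obj (PermCat.of m) ⟶ A.X.obj (PermCat.of n))
  | 0, h => eqToHom (congrArg (fun j => A.X.obj (PermCat.of j)) (Nat.le_zero.mp h))
  | n + 1, h =>
      if hm : m = n + 1 then eqToHom (congrArg (fun j => A.X.obj (PermCat.of j)) hm)
      else iterTo A m n (Nat.lt_succ_iff.mp (Nat.lt_of_le_of_ne h hm)) ≫ A.s n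

lemma iterTo_self (A : MObj.{u}) (m : ℕ) (h : m ≤ m) : iterTo A m m h = 𝟙 _ := by
  cases m with
  | zero => rfl
  | succ n =>
      show dite ((n + 1 : ℕ) = n + 1) _ _ = _
      rw [dif_pos rfl]
      rfl

lemma iterTo_succ (A : MObj.{u}) {m n : ℕ} (h : m ≤ n) (h' : m ≤ n + 1) :
    iterTo A m (n + 1) h' = iterTo A m n h ≫ A.s n := by
  show dite ((m : ℕ) = n + 1) _ _ = _
  rw [dif_neg (by omega)]

lemma iterTo_trans (A : MObj.{u}) :
    ∀ {l m n : ℕ} (h1 : l ≤ m) (h2 : m ≤ n),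
      iterTo A l m h1 ≫ iterTo A m n h2 = iterTo A l n (h1.trans h2) := by
  intro l m n
  induction n with
  | zero =>
      intro h1 h2
      obtain rfl : m = 0 := Nat.le_zero.mp h2
      obtain rfl : l = 0 := Nat.le_zero.mp h1
      rw [iterTo_self]
      simp
  | succ n ih =>
      intro h1 h2
      by_cases hm : m = n + 1
      · subst hm
        rw [iterTo_self]
        simp
      · have h2' : m ≤ n := by omega
        have hl : l ≤ n := h1.trans h2'
        rw [iterTo_succ A h2' h2, iterTo_succ A hl (hl.trans (Nat.le_succ n)),
          ← Category.assoc, ih h1 h2']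

lemma iterTo_add (A : MObj.{u}) (m : ℕ) :
    ∀ (k : ℕ) (h : m ≤ m + k), iterTo A m (m + k) h = iterMap A.X A.s m k
  | 0, h => iterTo_self A m h
  | k + 1, h => by
      show iterTo A m ((m + k) + 1) h = iterMap A.X A.s m k ≫ A.s (m + k)
      rw [iterTo_succ A (Nat.le_add_right m k) h, iterTo_add A m k]

/-- The action of an arbitrary injection on an `MObj`. -/
noncomputable def transMap (A : MObj.{u}) {m n : ℕ} (f : Fin m → Fin n)
    (hf : Function.Injective f) :
    A.X.obj (PermCat.of m) ⟶ A.X.obj (PermCat.of n) :=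
  iterTo A m n (inj_le hf) ≫ A.X.map (permHom (extPerm f hf))

lemma transMap_eq (A : MObj.{u}) {m n : ℕ} (f : Fin m → Fin n)
    (hf : Function.Injective f) (h : m ≤ n) (σ : Equiv.Perm (Fin n))
    (hσ : ∀ i, σ (Fin.castLE h i) = f i) :
    transMap A f hf = iterTo A m n h ≫ A.X.map (permHom σ) := by
  obtain ⟨k, rfl⟩ := Nat.exists_eq_add_of_le h
  have hσ' : ∀ i, extPerm f hf (Fin.castLE h i) = f i := extPerm_spec f hf
  have hfix : ∀ i : Fin m, (σ⁻¹ * extPerm f hf) (Fin.castAdd k i) = Fin.castAdd k i := by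
    intro i
    have e : Fin.castAdd k i = Fin.castLE h i := Fin.ext rfl
    rw [Equiv.Perm.mul_apply, e, hσ' i, ← hσ i, ← Equiv.Perm.mul_apply, inv_mul_cancel, Equiv.Perm.one_apply]
  obtain ⟨τ, hτ⟩ := fixing_eq_blockSum _ hfix
  have hdecomp : extPerm f hf = σ * blockSum m τ := by
    rw [← hτ, ← mul_assoc, mul_inv_cancel, one_mul]
  show iterTo A m (m + k) (inj_le hf) ≫ A.X.map (permHom (extPerm f hf)) = _
  rw [hdecomp, permHom_mul, A.X.map_comp, iterTo_add, ← Category.assoc,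
    A.stab_inv m k τ]

lemma transMap_id (A : MObj.{u}) (m : ℕ) :
    transMap A (id : Fin m → Fin m) Function.injective_id = 𝟙 _ := by
  rw [transMap_eq A id Function.injective_id le_rfl 1 (fun i => Fin.ext rfl),
    iterTo_self, permHom_one, A.X.map_id]
  simp

lemma transMap_comp (A : MObj.{u}) {l m n : ℕ} (f : Fin l → Fin m)
    (hf : Function.Injective f) (g : Fin m → Fin n) (hg : Function.Injective g) :
    transMap A (g ∘ f) (hg.comp hf) = transMap A f hf ≫ transMap A g hg := by
  have h1 : l ≤ m := inj_le hf
  have h2 : m ≤ n := inj_le hg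
  obtain ⟨j, rfl⟩ := Nat.exists_eq_add_of_le h1
  obtain ⟨k, rfl⟩ := Nat.exists_eq_add_of_le h2
  obtain ⟨σ, hσ⟩ := exists_ext h1 f hf
  obtain ⟨ρ, hρ⟩ := exists_ext h2 g hg
  have hext : ∀ i, (ρ * iterSucc σ k) (Fin.castLE (h1.trans h2) i) = g (f i) := by
    intro i
    have e1 : Fin.castLE (h1.trans h2) i
        = Fin.castLE (Nat.le_add_right (l + j) k) (Fin.castLE h1 i) := Fin.ext rfl
    have e2 : Fin.castLE (Nat.le_add_right (l + j) k) (f i) = Fin.castLE h2 (f i) :=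
      Fin.ext rfl
    rw [Equiv.Perm.mul_apply, e1, iterSucc_castLE, hσ i, e2, hρ (f i)]
  rw [transMap_eq A (g ∘ f) (hg.comp hf) (h1.trans h2) (ρ * iterSucc σ k) hext,
    transMap_eq A f hf h1 σ hσ, transMap_eq A g hg h2 ρ hρ,
    permHom_mul, A.X.map_comp]
  have := map_iterMap A σ k
  rw [← iterTo_add A (l + j) k (Nat.le_add_right _ _)] at this
  rw [← iterTo_trans A h1 h2]
  slice_rhs 2 3 => rw [this]
  simp only [Category.assoc]

lemma transMap_perm (A : MObj.{u}) {p q : ℕ} (f : PermCat.of p ⟶ PermCat.of q) :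
    transMap A f.1 f.2.injective = A.X.map f := by
  obtain rfl : p = q := by
    simpa using Fintype.card_congr (α := Fin p) (β := Fin q) (Equiv.ofBijective f.1 f.2)
  show transMap A (m := p) (n := p) f.1 f.2.injective = _
  have hσ : ∀ i : Fin p, (Equiv.ofBijective (α := Fin p) (β := Fin p) f.1 f.2) (Fin.castLE le_rfl i) = f.1 i := by
    intro i
    have : Fin.castLE (le_rfl : p ≤ p) i = i := Fin.ext rfl
    rw [this]; rfl
  rw [transMap_eq A (m := p) (n := p) f.1 f.2.injective le_rfl (Equiv.ofBijective f.1 f.2) hσ, iterTo_self]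
  have : permHom (n := p) (Equiv.ofBijective (α := Fin p) (β := Fin p) f.1 f.2) = f := Subtype.ext rfl
  rw [this]
  simp

lemma transMap_iota (A : MObj.{u}) (n : ℕ) :
    transMap A (iota n).1 (iota n).2 = A.s n := by
  show transMap A (m := n) (n := n + 1) (iota n).1 (iota n).2 = _
  rw [transMap_eq A (m := n) (n := n + 1) (iota n).1 (iota n).2 (Nat.le_succ n) 1
      (fun i => Fin.ext rfl),
    iterTo_succ A le_rfl (Nat.le_succ n), iterTo_self, permHom_one, A.X.map_id]
  simp

/-- The functor `𝕀 ⥤ TopCat` built from an object of `M`. -/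
noncomputable def toFunctor (A : MObj.{u}) : InjCat ⥤ TopCat.{u} where
  obj n := A.X.obj (PermCat.of n)
  map f := transMap A f.1 f.2
  map_id n := transMap_id A n
  map_comp f g := transMap_comp A f.1 f.2 g.1 g.2

end Aux

section Main

lemma iotaMany_nat (F G : InjCat ⥤ TopCat.{u})
    (mh : restrictFunctor.obj F ⟶ restrictFunctor.obj G) (m : ℕ) :
    ∀ k : ℕ, F.map (iotaMany m k) ≫ mh.α.app (PermCat.of (m + k))
      = mh.α.app (PermCat.of m) ≫ G.map (iotaMany m k)
  | 0 => by
      have h1 : F.map (iotaMany m 0) = 𝟙 _ := by rw [iotaMany_zero, F.map_id]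
      have h2 : G.map (iotaMany m 0) = 𝟙 _ := by rw [iotaMany_zero, G.map_id]
      erw [h1, h2, Category.id_comp]
  | k + 1 => by
      have hc : F.map (iota (m + k)) ≫ mh.α.app (PermCat.of (m + (k + 1)))
          = mh.α.app (PermCat.of (m + k)) ≫ G.map (iota (m + k)) := mh.comm (m + k)
      erw [← iotaMany_succ, F.map_comp, G.map_comp, Category.assoc, hc, ← Category.assoc,
        iotaMany_nat F G mh m k, Category.assoc]

lemma nat_aux (F G : InjCat ⥤ TopCat.{u})
    (mh : restrictFunctor.obj F ⟶ restrictFunctor.obj G)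
    {m n : ℕ} (f : InjCat.of m ⟶ InjCat.of n) :
    F.map f ≫ mh.α.app (PermCat.of n) = mh.α.app (PermCat.of m) ≫ G.map f := by
  have h : m ≤ n := inj_le f.2
  obtain ⟨k, hk⟩ := Nat.exists_eq_add_of_le h
  subst hk
  obtain ⟨σ, hσ⟩ := exists_ext h f.1 f.2
  have hfact : f = iotaMany m k ≫ permToInj.map (permHom σ) :=
    Subtype.ext (funext fun i => (hσ i).symm)
  have hnat : F.map (permToInj.map (permHom σ)) ≫ mh.α.app (PermCat.of (m + k))
      = mh.α.app (PermCat.of (m + k)) ≫ G.map (permToInj.map (permHom σ)) :=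
    mh.α.naturality (permHom σ)
  erw [hfact, F.map_comp, G.map_comp, Category.assoc, hnat, ← Category.assoc,
    iotaMany_nat F G mh m k, Category.assoc]

lemma restrict_faithful : restrictFunctor.{u}.Faithful := by
  constructor
  intro F G β β' hβ
  apply NatTrans.ext
  funext X
  exact congrArg (fun (h : restrictFunctor.obj F ⟶ restrictFunctor.obj G) =>
    h.α.app (PermCat.of X)) hβ

lemma restrict_full : restrictFunctor.{u}.Full := by
  constructor
  intro F G mh
  refine ⟨{ app := fun n => mh.α.app (PermCat.of n),
            naturality := fun m n f => nat_aux F G mh f }, ?_⟩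
  rfl

lemma restrict_essSurj : restrictFunctor.{u}.EssSurj := by
  constructor
  intro A
  refine ⟨toFunctor A, ⟨?_⟩⟩
  refine
    { hom :=
        { α :=
            { app := fun p => 𝟙 (A.X.obj p)
              naturality := fun p q f => by
                show (toFunctor A).map (permToInj.map f) ≫ 𝟙 (A.X.obj q)
                  = 𝟙 (A.X.obj p) ≫ A.X.map f
                exact (Category.comp_id _).trans
                  ((transMap_perm A (p := p) (q := q) f).trans (Category.id_comp _).symm) }
          comm := fun n => by
            show transMap A (iota n).1 (iota n).2 ≫ 𝟙 (A.X.obj (PermCat.of (n + 1)))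
              = 𝟙 (A.X.obj (PermCat.of n)) ≫ A.s n
            exact (Category.comp_id _).trans
              ((transMap_iota A n).trans (Category.id_comp _).symm) }
      inv :=
        { α :=
            { app := fun p => 𝟙 (A.X.obj p)
              naturality := fun p q f => by
                show A.X.map f ≫ 𝟙 (A.X.obj q)
                  = 𝟙 (A.X.obj p) ≫ (toFunctor A).map (permToInj.map f)
                exact (Category.comp_id _).trans
                  ((transMap_perm A (p := p) (q := q) f).symm.trans
                    (Category.id_comp _).symm) }
          comm := fun n => by
            show A.s n ≫ 𝟙 (A.X.obj (PermCat.of (n + 1)))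
              = 𝟙 (A.X.obj (PermCat.of n)) ≫ transMap A (iota n).1 (iota n).2
            exact (Category.comp_id _).trans
              ((transMap_iota A n).symm.trans (Category.id_comp _).symm) }
      hom_inv_id := by
        apply MHom.ext
        apply NatTrans.ext
        funext p
        show 𝟙 (A.X.obj p) ≫ 𝟙 (A.X.obj p) = 𝟙 (A.X.obj p)
        simp
      inv_hom_id := by
        apply MHom.ext
        apply NatTrans.ext
        funext p
        show 𝟙 (A.X.obj p) ≫ 𝟙 (A.X.obj p) = 𝟙 (A.X.obj p)
        simp }

end Main

theorem injCat_functors_equivalent_to_M :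
    restrictFunctor.{u}.IsEquivalence :=
  { faithful := restrict_faithful
    full := restrict_full
    essSurj := restrict_essSurj }
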